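/- Let Ψ : ℝⁿ × ℝⁿ → ℝ satisfy: Ψ(·,y) is C² on an open set G, (x,y) ↦ ∇²₁₁Ψ(x,y) is jointly continuous on G × G, Ψ ≥ 0, Ψ(x,x) = 0 for x ∈ G, and ∇²₁₁Ψ(x,x) is positive definite for all x in a compact convex set K ⊆ G. Then there exist δ > 0 and m > 0 such that m‖x−y‖² ≤ Ψ(x,y) for all x, y with y in the δ-neighborhood of K and ‖x−y‖ < δ. -/

import Mathlib

open scoped RealInnerProductSpace
open Metric

private lemma taylor_lb (f f' f'' : ℝ → ℝ) (c : ℝ)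
    (hd1 : ∀ t ∈ Set.Icc (0:ℝ) 1, HasDerivAt f (f' t) t)
    (hd2 : ∀ t ∈ Set.Icc (0:ℝ) 1, HasDerivAt f' (f'' t) t)
    (hf0 : f 0 = 0) (hf'0 : f' 0 = 0)
    (hlb : ∀ t ∈ Set.Icc (0:ℝ) 1, c ≤ f'' t) :
    c / 2 ≤ f 1 := by
  have hd1' : ∀ t ∈ Set.Icc (0:ℝ) 1, HasDerivAt (fun s => f' s - c * s) (f'' t - c) t := by
    intro t ht
    have h := (hd2 t ht).sub ((hasDerivAt_id t).const_mul c)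
    simp at h
    exact h
  have h1 : MonotoneOn (fun s => f' s - c * s) (Set.Icc 0 1) := by
    apply monotoneOn_of_deriv_nonneg (convex_Icc 0 1)
    · exact fun t ht => (hd1' t ht).continuousAt.continuousWithinAt
    · intro t ht
      rw [interior_Icc] at ht
      exact (hd1' t (Set.Ioo_subset_Icc_self ht)).differentiableAt.differentiableWithinAt
    · intro t ht
      rw [interior_Icc] at ht
      rw [(hd1' t (Set.Ioo_subset_Icc_self ht)).deriv]
      linarith [hlb t (Set.Ioo_subset_Icc_self ht)]
  have h1' : ∀ t ∈ Set.Icc (0:ℝ) 1, 0 ≤ f' t - c * t := by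
    intro t ht
    have := h1 (Set.left_mem_Icc.2 zero_le_one) ht ht.1
    simpa [hf'0] using this
  have hd2' : ∀ t ∈ Set.Icc (0:ℝ) 1,
      HasDerivAt (fun s => f s - c / 2 * s ^ 2) (f' t - c * t) t := by
    intro t ht
    have h := (hd1 t ht).sub ((hasDerivAt_pow 2 t).const_mul (c / 2))
    refine h.congr_deriv ?_
    push_cast
    ring
  have h2 : MonotoneOn (fun s => f s - c / 2 * s ^ 2) (Set.Icc 0 1) := by
    apply monotoneOn_of_deriv_nonneg (convex_Icc 0 1)
    · exact fun t ht => (hd2' t ht).continuousAt.continuousWithinAt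
    · intro t ht
      rw [interior_Icc] at ht
      exact (hd2' t (Set.Ioo_subset_Icc_self ht)).differentiableAt.differentiableWithinAt
    · intro t ht
      rw [interior_Icc] at ht
      rw [(hd2' t (Set.Ioo_subset_Icc_self ht)).deriv]
      exact h1' t (Set.Ioo_subset_Icc_self ht)
  have := h2 (Set.left_mem_Icc.2 zero_le_one) (Set.right_mem_Icc.2 zero_le_one) zero_le_one
  simp only [hf0] at this
  nlinarith [this]

private lemma coercivity_aux {n : ℕ} {K G : Set (EuclideanSpace ℝ (Fin n))} (hK : IsCompact K)
    (HΨ : EuclideanSpace ℝ (Fin n) → EuclideanSpace ℝ (Fin n) →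
      EuclideanSpace ℝ (Fin n) →L[ℝ] EuclideanSpace ℝ (Fin n))
    (hHcont : ContinuousOn (fun p : EuclideanSpace ℝ (Fin n) × EuclideanSpace ℝ (Fin n) =>
      HΨ p.1 p.2) (G ×ˢ G)) (hKG : K ⊆ G)
    (hpos : ∀ x ∈ K, ∀ v : EuclideanSpace ℝ (Fin n), v ≠ 0 → 0 < ⟪HΨ x x v, v⟫) :
    ∃ c > (0:ℝ), ∀ x ∈ K, ∀ v : EuclideanSpace ℝ (Fin n), c * ‖v‖ ^ 2 ≤ ⟪HΨ x x v, v⟫ := by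
  let E := EuclideanSpace ℝ (Fin n)
  by_cases hS : (K ×ˢ sphere (0:E) 1).Nonempty
  · have hSc : IsCompact (K ×ˢ sphere (0:E) 1) := hK.prod (isCompact_sphere 0 1)
    have hfc : ContinuousOn (fun p : E × E => ⟪HΨ p.1 p.1 p.2, p.2⟫) (K ×ˢ sphere (0:E) 1) := by
      have h1 : ContinuousOn (fun p : E × E => HΨ p.1 p.1) (K ×ˢ sphere (0:E) 1) :=
        ContinuousOn.comp hHcont
          ((continuous_fst.prodMk continuous_fst).continuousOn)
          (fun p hp => ⟨hKG hp.1, hKG hp.1⟩)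
      exact (h1.clm_apply continuousOn_snd).inner continuousOn_snd
    obtain ⟨p₀, hp₀, hmin⟩ := hSc.exists_isMinOn hS hfc
    have hp₀2 : p₀.2 ≠ 0 := by
      have := hp₀.2
      replace this : ‖p₀.2‖ = 1 := mem_sphere_zero_iff_norm.1 this
      intro h; rw [h] at this; simp at this
    refine ⟨⟪HΨ p₀.1 p₀.1 p₀.2, p₀.2⟫, hpos p₀.1 hp₀.1 p₀.2 hp₀2, ?_⟩
    intro x hx v
    rcases eq_or_ne v 0 with rfl | hv
    · simp
    · set c := ⟪HΨ p₀.1 p₀.1 p₀.2, p₀.2⟫ with hc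
      have hu : (‖v‖⁻¹ • v : E) ∈ sphere (0:E) 1 := by
        simp [norm_smul, norm_smul_of_nonneg, inv_mul_cancel₀ (norm_ne_zero_iff.2 hv)]
      have this : c ≤ ⟪HΨ x x (‖v‖⁻¹ • v), (‖v‖⁻¹ • v)⟫ := hmin (Set.mk_mem_prod hx hu)
      have hexp : ⟪HΨ x x (‖v‖⁻¹ • v), (‖v‖⁻¹ • v)⟫ = ‖v‖⁻¹ ^ 2 * ⟪HΨ x x v, v⟫ := by
        rw [map_smul, real_inner_smul_left, real_inner_smul_right]; ring
      rw [hexp] at this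
      have hn : (0:ℝ) < ‖v‖ := norm_pos_iff.2 hv
      have h2 : c * ‖v‖ ^ 2 ≤ ‖v‖⁻¹ ^ 2 * ⟪HΨ x x v, v⟫ * ‖v‖ ^ 2 := by
        nlinarith
      calc c * ‖v‖ ^ 2 ≤ ‖v‖⁻¹ ^ 2 * ⟪HΨ x x v, v⟫ * ‖v‖ ^ 2 := h2
        _ = ⟪HΨ x x v, v⟫ := by field_simp
  · refine ⟨1, one_pos, ?_⟩
    intro x hx v
    have hv : v = (0:E) := by
      by_contra hv
      exact hS ⟨(x, ‖v‖⁻¹ • v), Set.mk_mem_prod hx (by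
        simp [norm_smul, inv_mul_cancel₀ (norm_ne_zero_iff.2 hv)])⟩
    simp [hv]

/-- Lower norm bound: if in addition ∇²₁₁Ψ(x,x) ≻ 0 for all x in a compact
convex K ⊆ G, then there are δ, m > 0 with m‖x−y‖² ≤ Ψ(x,y) for all y in the
δ-neighborhood of K and ‖x−y‖ < δ. -/
theorem lower_norm_bound {n : ℕ} (G : Set (EuclideanSpace ℝ (Fin n))) (hG : IsOpen G)
    (Ψ : EuclideanSpace ℝ (Fin n) → EuclideanSpace ℝ (Fin n) → ℝ)
    (D₁Ψ : EuclideanSpace ℝ (Fin n) → EuclideanSpace ℝ (Fin n) → EuclideanSpace ℝ (Fin n))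
    (HΨ : EuclideanSpace ℝ (Fin n) → EuclideanSpace ℝ (Fin n) →
      EuclideanSpace ℝ (Fin n) →L[ℝ] EuclideanSpace ℝ (Fin n))
    (hgrad : ∀ y ∈ G, ∀ x ∈ G, HasGradientAt (fun x' => Ψ x' y) (D₁Ψ x y) x)
    (hhess : ∀ y ∈ G, ∀ x ∈ G, HasFDerivAt (fun x' => D₁Ψ x' y) (HΨ x y) x)
    (hHcont : ContinuousOn (fun p : EuclideanSpace ℝ (Fin n) × EuclideanSpace ℝ (Fin n) =>
      HΨ p.1 p.2) (G ×ˢ G))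
    (hnonneg : ∀ x y, 0 ≤ Ψ x y) (hdiag : ∀ x ∈ G, Ψ x x = 0)
    (K : Set (EuclideanSpace ℝ (Fin n))) (hK : IsCompact K) (hKconv : Convex ℝ K)
    (hKG : K ⊆ G)
    (hpos : ∀ x ∈ K, ∀ v : EuclideanSpace ℝ (Fin n), v ≠ 0 → 0 < ⟪HΨ x x v, v⟫) :
    ∃ δ > (0:ℝ), ∃ m > (0:ℝ),
      ∀ x y, y ∈ thickening δ K → ‖x - y‖ < δ → m * ‖x - y‖ ^ 2 ≤ Ψ x y := by
  classical
  obtain ⟨c, hc, hcoer⟩ := coercivity_aux hK HΨ hHcont hKG hpos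
  obtain ⟨r, hr, hrG⟩ := hK.exists_cthickening_subset_open hG hKG
  set K' := cthickening r K with hK'def
  have hK'c : IsCompact K' := hK.cthickening
  have hUC : UniformContinuousOn
      (fun p : EuclideanSpace ℝ (Fin n) × EuclideanSpace ℝ (Fin n) => HΨ p.1 p.2)
      (K' ×ˢ K') :=
    (hK'c.prod hK'c).uniformContinuousOn_of_continuous
      (hHcont.mono (Set.prod_mono hrG hrG))
  obtain ⟨δ', hδ'pos, hδ'⟩ := Metric.uniformContinuousOn_iff.mp hUC (c/2) (by positivity)
  refine ⟨min r δ' / 2, by positivity, c/4, by positivity, ?_⟩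
  intro x y hy hxy
  set δ := min r δ' / 2 with hδdef
  have h2δr : 2 * δ ≤ r := by
    have := min_le_left r δ'; simp only [hδdef]; linarith
  have h2δδ' : 2 * δ ≤ δ' := by
    have := min_le_right r δ'; simp only [hδdef]; linarith
  have hδpos : (0:ℝ) < δ := by positivity
  obtain ⟨x₀, hx₀K, hyx₀⟩ := mem_thickening_iff.mp hy
  have hx₀K' : x₀ ∈ K' := self_subset_cthickening K hx₀K
  have hyK' : y ∈ K' := Metric.mem_cthickening_of_dist_le y x₀ r K hx₀K (by linarith)
  have hyG : y ∈ G := hrG hyK'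
  rcases eq_or_ne x y with rfl | hne
  · simp only [sub_self, norm_zero]
    rw [hdiag _ hyG]
    norm_num
  set v := x - y with hvdef
  have hvne : v ≠ 0 := sub_ne_zero.2 hne
  set γ : ℝ → EuclideanSpace ℝ (Fin n) := fun t => y + t • v with hγdef
  have hγ0 : γ 0 = y := by simp [hγdef]
  have hγ1 : γ 1 = x := by simp [hγdef, hvdef]
  have hγK' : ∀ t ∈ Set.Icc (0:ℝ) 1, γ t ∈ K' := by
    intro t ht
    apply Metric.mem_cthickening_of_dist_le (γ t) x₀ r K hx₀K
    have h1 : dist (γ t) y = t * ‖v‖ := by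
      rw [dist_eq_norm, hγdef]
      simp [norm_smul, abs_of_nonneg ht.1]
    have h2 : dist (γ t) x₀ ≤ dist (γ t) y + dist y x₀ := dist_triangle _ _ _
    have h3 : t * ‖v‖ ≤ ‖v‖ := by nlinarith [ht.2, norm_nonneg v, ht.1]
    linarith
  have hγG : ∀ t ∈ Set.Icc (0:ℝ) 1, γ t ∈ G := fun t ht => hrG (hγK' t ht)
  -- Hessian lower bound along the segment
  have hHb : ∀ t ∈ Set.Icc (0:ℝ) 1, c/2 * ‖v‖^2 ≤ ⟪v, HΨ (γ t) y v⟫ := by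
    intro t ht
    have hdist : dist ((γ t, y) : EuclideanSpace ℝ (Fin n) × EuclideanSpace ℝ (Fin n))
        (x₀, x₀) < δ' := by
      rw [Prod.dist_eq]
      apply max_lt
      · have h1 : dist (γ t) y = t * ‖v‖ := by
          rw [dist_eq_norm, hγdef]
          simp [norm_smul, abs_of_nonneg ht.1]
        have h2 : dist (γ t) x₀ ≤ dist (γ t) y + dist y x₀ := dist_triangle _ _ _
        have h3 : t * ‖v‖ ≤ ‖v‖ := by nlinarith [ht.2, norm_nonneg v, ht.1]
        linarith
      · linarith
    have hsmall := hδ' (γ t, y) ⟨hγK' t ht, hyK'⟩ (x₀, x₀) ⟨hx₀K', hx₀K'⟩ hdist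
    rw [dist_eq_norm] at hsmall
    have hkey : |⟪(HΨ (γ t) y - HΨ x₀ x₀) v, v⟫| ≤ c/2 * ‖v‖^2 := by
      calc |⟪(HΨ (γ t) y - HΨ x₀ x₀) v, v⟫| ≤ ‖(HΨ (γ t) y - HΨ x₀ x₀) v‖ * ‖v‖ :=
            abs_real_inner_le_norm _ _
        _ ≤ ‖HΨ (γ t) y - HΨ x₀ x₀‖ * ‖v‖ * ‖v‖ := by
            have := (HΨ (γ t) y - HΨ x₀ x₀).le_opNorm v
            nlinarith [norm_nonneg v]
        _ ≤ c/2 * ‖v‖^2 := by nlinarith [norm_nonneg v, norm_nonneg (HΨ (γ t) y - HΨ x₀ x₀)]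
    have hsub : ⟪(HΨ (γ t) y - HΨ x₀ x₀) v, v⟫ = ⟪HΨ (γ t) y v, v⟫ - ⟪HΨ x₀ x₀ v, v⟫ := by
      rw [ContinuousLinearMap.sub_apply, inner_sub_left]
    have h0 := hcoer x₀ hx₀K v
    have habs := abs_le.1 hkey
    rw [real_inner_comm]
    rw [hsub] at habs
    linarith [habs.1]
  -- the gradient vanishes on the diagonal
  have hD0 : D₁Ψ y y = 0 := by
    have hmin : IsLocalMin (fun x' => Ψ x' y) y := by
      apply Filter.Eventually.of_forall
      intro z
      simp only [hdiag y hyG]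
      exact hnonneg z y
    have := hmin.hasFDerivAt_eq_zero (hgrad y hyG y hyG).hasFDerivAt
    have h2 := congrArg (InnerProductSpace.toDual ℝ (EuclideanSpace ℝ (Fin n))).symm this
    simpa using h2
  -- derivatives along the segment
  have hγd : ∀ t : ℝ, HasDerivAt γ v t := by
    intro t
    have := ((hasDerivAt_id t).smul_const v).const_add y
    simpa [hγdef] using this
  have hfd : ∀ t ∈ Set.Icc (0:ℝ) 1,
      HasDerivAt (fun s => Ψ (γ s) y) ⟪v, D₁Ψ (γ t) y⟫ t := by
    intro t ht
    have h := ((hgrad y hyG (γ t) (hγG t ht)).hasFDerivAt).comp_hasDerivAt t (hγd t)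
    have : (InnerProductSpace.toDual ℝ (EuclideanSpace ℝ (Fin n)) (D₁Ψ (γ t) y)) v
        = ⟪v, D₁Ψ (γ t) y⟫ := by
      rw [InnerProductSpace.toDual_apply_apply, real_inner_comm]
    rw [this] at h
    exact h
  have hgd : ∀ t ∈ Set.Icc (0:ℝ) 1,
      HasDerivAt (fun s => ⟪v, D₁Ψ (γ s) y⟫) ⟪v, HΨ (γ t) y v⟫ t := by
    intro t ht
    have h1 : HasFDerivAt (fun z => (innerSL ℝ v) (D₁Ψ z y))
        ((innerSL ℝ v).comp (HΨ (γ t) y)) (γ t) :=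
      ((innerSL ℝ v).hasFDerivAt).comp (γ t) (hhess y hyG (γ t) (hγG t ht))
    have h2 := h1.comp_hasDerivAt t (hγd t)
    simp at h2
    exact h2
  -- apply the 1-D Taylor lemma
  have hf0 : Ψ (γ 0) y = 0 := by rw [hγ0]; exact hdiag y hyG
  have hf'0 : ⟪v, D₁Ψ (γ 0) y⟫ = 0 := by rw [hγ0, hD0, inner_zero_right]
  have hmain := taylor_lb (fun t => Ψ (γ t) y) (fun t => ⟪v, D₁Ψ (γ t) y⟫)
    (fun t => ⟪v, HΨ (γ t) y v⟫) (c/2 * ‖v‖^2) hfd hgd hf0 hf'0 hHb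
  have hmain' : c / 2 * ‖v‖ ^ 2 / 2 ≤ Ψ (γ 1) y := hmain
  rw [hγ1] at hmain'
  calc c/4 * ‖v‖^2 = c/2 * ‖v‖^2/2 := by ring
    _ ≤ Ψ x y := hmain'
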